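/- Let A be a commutative algebra with positively multiplicative basis B and ω a finite-order linear automorphism permuting B up to positive scalars. If ω is an algebra automorphism, then the fixed subalgebra S(A) = ker(ω - id) is a subalgebra of A and the orbit-sums s_l form a basis of S(A) with nonnegative structure constants. -/

import Mathlib

/-- Let `A` be a commutative algebra with positively multiplicative basis
`b 0 = 1, ..., b (n-1)` and `ω` an algebra automorphism of finite order `m` with
`ω (b i) = lam i • b (σ i)`, `lam i > 0`. Then the fixed set of `ω` is a subalgebra with
basis the orbit-sums `s r = ∑_{a<m} ω^a (b r)` (`r` running over representatives `R` of
the `σ`-orbits), and the structure constants of this basis are nonnegative. -/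
theorem fixed_subalgebra_positively_multiplicative
    (n m : ℕ) [NeZero n] (hm : 0 < m) {A : Type*} [CommRing A] [Algebra ℝ A]
    (b : Module.Basis (Fin n) ℝ A) (h1 : b 0 = 1)
    (c : Fin n → Fin n → Fin n → ℝ)
    (hmul : ∀ i j, b i * b j = ∑ k, c i j k • b k)
    (hpos : ∀ i j k, 0 ≤ c i j k)
    (ω : A ≃ₐ[ℝ] A) (hord : (ω.toLinearMap) ^ m = 1)
    (σ : Equiv.Perm (Fin n)) (lam : Fin n → ℝ) (hlam : ∀ i, 0 < lam i)
    (hω : ∀ i, ω (b i) = lam i • b (σ i))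
    (R : Finset (Fin n))
    (hR : ∀ i : Fin n, ∃! r, r ∈ R ∧ σ.SameCycle r i) :
    LinearIndependent ℝ
        (fun r : R => ∑ a ∈ Finset.range m, (ω.toLinearMap ^ a) (b ↑r)) ∧
    (∀ x : A, ω x = x ↔
      x ∈ Submodule.span ℝ
        (Set.range fun r : R => ∑ a ∈ Finset.range m, (ω.toLinearMap ^ a) (b ↑r))) ∧
    ∃ d : R → R → R → ℝ, (∀ r r' r'', 0 ≤ d r r' r'') ∧
      ∀ r r' : R,
        (∑ a ∈ Finset.range m, (ω.toLinearMap ^ a) (b ↑r)) *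
          (∑ a ∈ Finset.range m, (ω.toLinearMap ^ a) (b ↑r')) =
        ∑ r'' : R, d r r' r'' • ∑ a ∈ Finset.range m, (ω.toLinearMap ^ a) (b ↑r'') := by
  classical
  set f : A →ₗ[ℝ] A := ω.toLinearMap with hf
  set μ : ℕ → Fin n → ℝ := fun a i => ∏ t ∈ Finset.range a, lam ((σ ^ t) i) with hμ
  have μpos : ∀ a i, 0 < μ a i := fun a i => Finset.prod_pos (fun t _ => hlam _)
  have μzero : ∀ i, μ 0 i = 1 := fun i => by simp [hμ]
  -- the action of powers of ω on the basis
  have powb : ∀ a (i : Fin n), (f ^ a) (b i) = μ a i • b ((σ ^ a) i) := by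
    intro a
    induction a with
    | zero => intro i; simp [μzero]
    | succ a ih =>
      intro i
      have h1' : (f ^ (a + 1)) (b i) = (f ^ a) (f (b i)) := by
        rw [pow_succ, Module.End.mul_apply]
      have h2' : f (b i) = lam i • b (σ i) := hω i
      rw [h1', h2', map_smul, ih (σ i)]
      have hσ : (σ ^ a) (σ i) = (σ ^ (a + 1)) i := by
        rw [pow_succ, Equiv.Perm.mul_apply]
      have hμ' : μ (a + 1) i = lam i * μ a (σ i) := by
        show ∏ t ∈ Finset.range (a + 1), lam ((σ ^ t) i)
            = lam i * ∏ t ∈ Finset.range a, lam ((σ ^ t) (σ i))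
        have hpt : ∀ t : ℕ, (σ ^ (t + 1)) i = (σ ^ t) (σ i) := fun t => by
          rw [pow_succ, Equiv.Perm.mul_apply]
        rw [Finset.prod_range_succ']
        simp only [hpt, pow_zero, Equiv.Perm.one_apply]
        ring
      rw [hσ, hμ', smul_smul]
  set s : Fin n → A := fun i => ∑ a ∈ Finset.range m, (f ^ a) (b i) with hs
  have fpow_add_m : ∀ e : ℕ, f ^ (m + e) = f ^ e := by
    intro e; rw [pow_add, hord, one_mul]
  -- shifting the sum
  have shift1 : ∀ g : ℕ → A, g m = g 0 →
      ∑ a ∈ Finset.range m, g (a + 1) = ∑ a ∈ Finset.range m, g a := by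
    intro g hg
    have h1' := Finset.sum_range_succ' g m
    have h2' := Finset.sum_range_succ g m
    rw [h2', hg] at h1'
    exact add_right_cancel h1'.symm
  have sshift : ∀ (e : ℕ) (i : Fin n),
      ∑ a ∈ Finset.range m, (f ^ (a + e)) (b i) = s i := by
    intro e
    induction e with
    | zero => intro i; simp [hs]
    | succ e ih =>
      intro i
      have : ∀ a : ℕ, a + (e + 1) = (a + 1) + e := by omega
      calc ∑ a ∈ Finset.range m, (f ^ (a + (e + 1))) (b i)
          = ∑ a ∈ Finset.range m, (f ^ ((a + 1) + e)) (b i) := by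
            apply Finset.sum_congr rfl; intro a _; rw [this a]
        _ = ∑ a ∈ Finset.range m, (f ^ (a + e)) (b i) := by
            apply shift1 (fun a => (f ^ (a + e)) (b i))
            show (f ^ (m + e)) (b i) = (f ^ (0 + e)) (b i)
            rw [fpow_add_m, zero_add]
        _ = s i := ih i
  -- each s i is fixed by ω
  have sfix : ∀ i, ω (s i) = s i := by
    intro i
    have : ω (s i) = ∑ a ∈ Finset.range m, (f ^ (a + 1)) (b i) := by
      rw [hs]
      simp only [map_sum]
      apply Finset.sum_congr rfl
      intro a _
      rw [pow_succ', Module.End.mul_apply]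
      rfl
    rw [this, sshift 1 i]
  -- representatives and exponents
  have hrep : ∀ i : Fin n, ∃ r, r ∈ R ∧ ∃ e : ℕ, (σ ^ e) r = i := by
    intro i
    obtain ⟨r, ⟨hrR, hrc⟩, -⟩ := hR i
    obtain ⟨e, -, he⟩ := hrc.exists_pow_eq'
    exact ⟨r, hrR, e, he⟩
  choose ρ hρR e he using hrep
  -- relation between s i and s of its representative
  have srel : ∀ i : Fin n, s i = (μ (e i) (ρ i))⁻¹ • s (ρ i) := by
    intro i
    have hb : b i = (μ (e i) (ρ i))⁻¹ • (f ^ (e i)) (b (ρ i)) := by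
      rw [powb, smul_smul, inv_mul_cancel₀ (μpos _ _).ne', one_smul, he i]
    calc s i = ∑ a ∈ Finset.range m, (f ^ a) (b i) := hs ▸ rfl
      _ = ∑ a ∈ Finset.range m, (μ (e i) (ρ i))⁻¹ • (f ^ (a + (e i))) (b (ρ i)) := by
          apply Finset.sum_congr rfl
          intro a _
          rw [hb, map_smul, pow_add, Module.End.mul_apply]
      _ = (μ (e i) (ρ i))⁻¹ • ∑ a ∈ Finset.range m, (f ^ (a + (e i))) (b (ρ i)) := by
          rw [Finset.smul_sum]
      _ = (μ (e i) (ρ i))⁻¹ • s (ρ i) := by rw [sshift]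
  -- key decomposition of fixed elements
  have key : ∀ x : A, ω x = x →
      x = ∑ r ∈ R, ((m : ℝ)⁻¹ *
        ∑ j ∈ Finset.univ.filter (fun j => ρ j = r),
          b.repr x j * (μ (e j) (ρ j))⁻¹) • s r := by
    intro x hx
    have hxa : ∀ a : ℕ, (f ^ a) x = x := by
      intro a
      induction a with
      | zero => simp
      | succ a ih =>
        rw [pow_succ', Module.End.mul_apply, ih]
        exact hx
    have h1' : ∑ j, (b.repr x j) • s j = (m : ℝ) • x := by
      calc ∑ j, (b.repr x j) • s j
          = ∑ j, ∑ a ∈ Finset.range m, (b.repr x j) • (f ^ a) (b j) := by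
            simp [hs, Finset.smul_sum]
        _ = ∑ a ∈ Finset.range m, ∑ j, (b.repr x j) • (f ^ a) (b j) := Finset.sum_comm
        _ = ∑ a ∈ Finset.range m, (f ^ a) (∑ j, (b.repr x j) • b j) := by
            simp only [map_sum, map_smul]
        _ = ∑ a ∈ Finset.range m, (f ^ a) x := by rw [Module.Basis.sum_repr]
        _ = ∑ _a ∈ Finset.range m, x := by
            apply Finset.sum_congr rfl; intro a _; exact hxa a
        _ = (m : ℝ) • x := by
            rw [Finset.sum_const, Finset.card_range, ← Nat.cast_smul_eq_nsmul ℝ]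
    have hmne : (m : ℝ) ≠ 0 := Nat.cast_ne_zero.mpr hm.ne'
    calc x = (m : ℝ)⁻¹ • ((m : ℝ) • x) := by
          rw [smul_smul, inv_mul_cancel₀ hmne, one_smul]
      _ = (m : ℝ)⁻¹ • ∑ j, (b.repr x j) • s j := by rw [h1']
      _ = (m : ℝ)⁻¹ • ∑ r ∈ R, ∑ j ∈ Finset.univ.filter (fun j => ρ j = r),
            (b.repr x j) • s j := by
          rw [Finset.sum_fiberwise_of_maps_to (fun j _ => hρR j)]
      _ = ∑ r ∈ R, ((m : ℝ)⁻¹ *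
            ∑ j ∈ Finset.univ.filter (fun j => ρ j = r),
              b.repr x j * (μ (e j) (ρ j))⁻¹) • s r := by
          rw [Finset.smul_sum]
          apply Finset.sum_congr rfl
          intro r hr
          have hin : ∑ j ∈ Finset.univ.filter (fun j => ρ j = r), (b.repr x j) • s j
              = (∑ j ∈ Finset.univ.filter (fun j => ρ j = r),
                  b.repr x j * (μ (e j) (ρ j))⁻¹) • s r := by
            rw [Finset.sum_smul]
            apply Finset.sum_congr rfl
            intro j hj
            have hj' : ρ j = r := by simpa using (Finset.mem_filter.mp hj).2
            rw [srel j, hj', smul_smul]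
          rw [hin, smul_smul]
  -- coordinates of s
  have reprs : ∀ i j : Fin n, b.repr (s i) j
      = ∑ a ∈ Finset.range m, μ a i * (if (σ ^ a) i = j then 1 else 0) := by
    intro i j
    rw [hs]
    simp only [map_sum, Finsupp.coe_finset_sum, Finset.sum_apply]
    apply Finset.sum_congr rfl
    intro a _
    rw [powb, map_smul]
    simp [Module.Basis.repr_self, Finsupp.single_apply, mul_comm]
  have Fnonneg : ∀ i j : Fin n, 0 ≤ b.repr (s i) j := by
    intro i j
    rw [reprs]
    apply Finset.sum_nonneg
    intro a _
    apply mul_nonneg (μpos a i).le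
    split <;> norm_num
  have Fzero : ∀ r r₀ : Fin n, r ∈ R → r₀ ∈ R → r ≠ r₀ → b.repr (s r) r₀ = 0 := by
    intro r r₀ hr hr₀ hne
    rw [reprs]
    apply Finset.sum_eq_zero
    intro a _
    rw [if_neg, mul_zero]
    intro hcon
    apply hne
    have hsc : σ.SameCycle r r₀ := ⟨(a : ℤ), by rw [zpow_natCast]; exact hcon⟩
    exact (hR r₀).unique ⟨hr, hsc⟩ ⟨hr₀, Equiv.Perm.SameCycle.refl σ r₀⟩
  have Fpos : ∀ r : Fin n, 0 < b.repr (s r) r := by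
    intro r
    rw [reprs]
    apply Finset.sum_pos'
    · intro a _
      apply mul_nonneg (μpos a r).le
      split <;> norm_num
    · refine ⟨0, Finset.mem_range.mpr hm, ?_⟩
      rw [μzero, if_pos (by simp)]
      norm_num
  -- Part 1: linear independence
  have part1 : LinearIndependent ℝ (fun r : R => s ↑r) := by
    rw [Fintype.linearIndependent_iff]
    intro g hg r₀
    have h0 : (0 : ℝ) = ∑ r : R, g r * b.repr (s ↑r) ↑r₀ := by
      have := congrArg (fun y => b.repr y ↑r₀) hg
      simpa [map_sum, map_smul, Finsupp.coe_finset_sum, Finset.sum_apply] using this.symm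
    rw [Finset.sum_eq_single r₀ (fun r _ hne => by
      rw [Fzero ↑r ↑r₀ r.2 r₀.2 (fun hcc => hne (Subtype.ext hcc)), mul_zero])
      (fun habs => absurd (Finset.mem_univ r₀) habs)] at h0
    have := Fpos (↑r₀ : Fin n)
    rcases mul_eq_zero.mp h0.symm with h | h
    · exact h
    · exact absurd h this.ne'
  -- Part 2
  have part2 : ∀ x : A, ω x = x ↔
      x ∈ Submodule.span ℝ (Set.range fun r : R => s ↑r) := by
    intro x
    constructor
    · intro hx
      rw [key x hx]
      apply Submodule.sum_mem
      intro r hr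
      apply Submodule.smul_mem
      apply Submodule.subset_span
      exact ⟨⟨r, hr⟩, rfl⟩
    · intro hx
      have hT : Submodule.span ℝ (Set.range fun r : R => s ↑r)
          ≤ LinearMap.ker (f - LinearMap.id) := by
        rw [Submodule.span_le]
        rintro y ⟨r, rfl⟩
        simp only [SetLike.mem_coe, LinearMap.mem_ker, LinearMap.sub_apply, LinearMap.id_apply]
        rw [sub_eq_zero]
        exact sfix ↑r
      have := hT hx
      rw [LinearMap.mem_ker, LinearMap.sub_apply, LinearMap.id_apply, sub_eq_zero] at this
      exact this
  -- nonnegativity of coordinates of products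
  have reprProd : ∀ r r' i, 0 ≤ b.repr (s r * s r') i := by
    intro r r' i
    have hexp : s r * s r'
        = ∑ j, ∑ k, (b.repr (s r) j * b.repr (s r') k) • ∑ i', c j k i' • b i' := by
      conv_lhs => rw [← Module.Basis.sum_repr b (s r), ← Module.Basis.sum_repr b (s r')]
      rw [Finset.sum_mul_sum]
      apply Finset.sum_congr rfl
      intro j _
      apply Finset.sum_congr rfl
      intro k _
      rw [smul_mul_assoc, mul_smul_comm, smul_smul, hmul]
    rw [hexp]
    simp only [map_sum, map_smul, Finsupp.coe_finset_sum, Finset.sum_apply,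
      Finsupp.smul_apply, Module.Basis.repr_self, Finsupp.single_apply, smul_eq_mul,
      mul_ite, mul_one, mul_zero]
    apply Finset.sum_nonneg
    intro j _
    apply Finset.sum_nonneg
    intro k _
    apply mul_nonneg (mul_nonneg (Fnonneg r j) (Fnonneg r' k))
    apply Finset.sum_nonneg
    intro i' _
    split
    · next h => exact hpos j k i'
    · exact le_rfl
  -- Part 3
  have part3 : ∃ d : R → R → R → ℝ, (∀ r r' r'', 0 ≤ d r r' r'') ∧
      ∀ r r' : R, s ↑r * s ↑r' = ∑ r'' : R, d r r' r'' • s ↑r'' := by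
    refine ⟨fun r r' r'' => (m : ℝ)⁻¹ *
      ∑ j ∈ Finset.univ.filter (fun j => ρ j = ↑r''),
        b.repr (s ↑r * s ↑r') j * (μ (e j) (ρ j))⁻¹, ?_, ?_⟩
    · intro r r' r''
      apply mul_nonneg (by positivity)
      apply Finset.sum_nonneg
      intro j _
      exact mul_nonneg (reprProd ↑r ↑r' j) (inv_nonneg.mpr (μpos _ _).le)
    · intro r r'
      have hfix : ω (s ↑r * s ↑r') = s ↑r * s ↑r' := by
        rw [map_mul, sfix, sfix]
      conv_lhs => rw [key _ hfix]
      exact (Finset.sum_coe_sort R (fun j => ((m : ℝ)⁻¹ *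
        ∑ j' ∈ Finset.univ.filter (fun j' => ρ j' = j),
          b.repr (s ↑r * s ↑r') j' * (μ (e j') (ρ j'))⁻¹) • s j)).symm
  exact ⟨part1, part2, part3⟩
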